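/- Let V be a real inner product space, M ⊆ V̄ subspaces of V, and R : V → ℝ a norm that is decomposable with respect to (M, V̄^⊥), i.e., R(θ + γ) = R(θ) + R(γ) for all θ ∈ M and γ ∈ V̄^⊥. Then for any θ* ∈ V and any Δ ∈ V, writing Δ = Δ_{V̄} + Δ_{V̄^⊥} for the orthogonal decomposition with respect to V̄, one has R(θ* + Δ) − R(θ*) ≥ R(Δ_{V̄^⊥}) − R(Δ_{V̄}) − 2 R(θ*_{M^⊥}), where θ*_{M^⊥} is the orthogonal projection of θ* onto M^⊥. -/

import Mathlib

open Submodule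

/-- Deviation inequality for decomposable regularizers: if the norm `R` is decomposable
with respect to `(M, V̄ᗮ)`, then
`R(θ* + Δ) − R(θ*) ≥ R(Δ_{V̄ᗮ}) − R(Δ_{V̄}) − 2 R(θ*_{Mᗮ})`. -/
theorem decomposable_regularizer_deviation
    {V : Type*} [NormedAddCommGroup V] [InnerProductSpace ℝ V] [FiniteDimensional ℝ V]
    (M Vbar : Submodule ℝ V) (hMV : M ≤ Vbar)
    (R : V → ℝ)
    (hR_tri : ∀ x y : V, R (x + y) ≤ R x + R y)
    (hR_neg : ∀ x : V, R (-x) = R x)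
    (hdecomp : ∀ θ ∈ M, ∀ γ ∈ Vbarᗮ, R (θ + γ) = R θ + R γ)
    (θs Δ : V) :
    R ((orthogonalProjection Vbarᗮ Δ : V)) - R ((orthogonalProjection Vbar Δ : V))
        - 2 * R ((orthogonalProjection Mᗮ θs : V))
      ≤ R (θs + Δ) - R θs := by
  set θM : V := (orthogonalProjection M θs : V) with hθM
  set θMp : V := (orthogonalProjection Mᗮ θs : V) with hθMp
  set ΔV : V := (orthogonalProjection Vbar Δ : V) with hΔV
  set ΔVp : V := (orthogonalProjection Vbarᗮ Δ : V) with hΔVp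
  have h1 : θM + θMp = θs :=
    starProjection_add_starProjection_orthogonal (K := M) θs
  have h2 : ΔV + ΔVp = Δ :=
    starProjection_add_starProjection_orthogonal (K := Vbar) Δ
  have hθMmem : θM ∈ M := (orthogonalProjection M θs).2
  have hΔVpmem : ΔVp ∈ Vbarᗮ := (orthogonalProjection Vbarᗮ Δ).2
  have hdec : R (θM + ΔVp) = R θM + R ΔVp := hdecomp θM hθMmem ΔVp hΔVpmem
  -- reverse triangle : R x ≤ R (x + y) + R y
  have hrev : ∀ x y : V, R x ≤ R (x + y) + R y := by
    intro x y
    have := hR_tri (x + y) (-y)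
    simpa [hR_neg] using this
  have key : R (θM + ΔVp) ≤ R (θs + Δ) + (R θMp + R ΔV) := by
    have hsum : (θM + ΔVp) + (θMp + ΔV) = θs + Δ := by
      rw [← h1, ← h2]; abel
    calc R (θM + ΔVp) ≤ R ((θM + ΔVp) + (θMp + ΔV)) + R (θMp + ΔV) :=
          hrev _ _
      _ ≤ R (θs + Δ) + (R θMp + R ΔV) := by
          rw [hsum]; exact add_le_add_right (hR_tri _ _) _
  have hθs : R θs ≤ R θM + R θMp := by
    have := hR_tri θM θMp
    rwa [h1] at this
  linarith [hdec, key, hθs]
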